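/- With notation as in the context, P − VV* = ∑_{w ∈ E⁰, 1≤i≤x_w} (p_w − ∑_{e ∈ s⁻¹(w)} s_e s_e*)·E_{m↑(w,i),m↑(w,i)} in M_h(A). -/

import Mathlib

/-- The range map extended to `E¹ ⊕ E⁰` via the convention `r v = v` for vertices. -/
def rext {V E : Type*} (r : E → V) : E ⊕ V → V := Sum.elim r id

/-- The index set `S↑(x)`. -/
def SUp {V E : Type*} (s : E → V) (x : V → ℤ) : Set ((E ⊕ V) × ℤ) :=
  {q | match q.1 with
       | Sum.inl e => 1 ≤ q.2 ∧ q.2 ≤ -x (s e)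
       | Sum.inr v => 1 ≤ q.2 ∧ q.2 ≤ x v}

/-- The index set `S↓(x)`. -/
def SDn {V E : Type*} (s : E → V) (x : V → ℤ) : Set ((E ⊕ V) × ℤ) :=
  {q | match q.1 with
       | Sum.inl e => 1 ≤ q.2 ∧ q.2 ≤ x (s e)
       | Sum.inr v => 1 ≤ q.2 ∧ q.2 ≤ -x v}

/-- The element `V` of `M_h(A)` associated to a family `{p_v, s_e}` and `x`:
`V = ∑_{w, 1≤i≤x_w, s(e)=w} s_e·E_{m↑(w,i),m↓(e,i)} + ∑_{w, 1≤i≤-x_w, s(e)=w} s_e*·E_{m↑(e,i),m↓(w,i)}`,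
where the first sum is indexed by the pairs `(e,i) ∈ S↓(x)` with `e ∈ E¹` (and `w = s(e)`),
and the second by the pairs `(e,i) ∈ S↑(x)` with `e ∈ E¹` (and `w = s(e)`). -/
noncomputable def Vmat {V E A : Type*} [AddCommMonoid A] [Star A]
    (s : E → V) (x : V → ℤ) (S : E → A) {h : ℕ}
    [Fintype (SUp s x)] [Fintype (SDn s x)]
    (mup : SUp s x ≃ Fin h) (mdn : SDn s x ≃ Fin h) : Matrix (Fin h) (Fin h) A :=
  (∑ q : SDn s x, match q with
    | ⟨(Sum.inl e, i), hq⟩ =>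
        Matrix.single (mup ⟨(Sum.inr (s e), i), hq⟩) (mdn ⟨(Sum.inl e, i), hq⟩) (S e)
    | ⟨(Sum.inr _, _), _⟩ => 0)
  + (∑ q : SUp s x, match q with
    | ⟨(Sum.inl e, i), hq⟩ =>
        Matrix.single (mup ⟨(Sum.inl e, i), hq⟩) (mdn ⟨(Sum.inr (s e), i), hq⟩) (star (S e))
    | ⟨(Sum.inr _, _), _⟩ => 0)

/-- The element `P` of `M_h(A)`:
`P = ∑_{w, 1≤i≤x_w} p_w·E_{m↑(w,i),m↑(w,i)} + ∑_{w, 1≤i≤-x_w, s(e)=w} p_{r(e)}·E_{m↑(e,i),m↑(e,i)}`,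
written as a single sum over `S↑(x)` using the convention `r v = v`. -/
noncomputable def Pmat {V E A : Type*} [AddCommMonoid A]
    (r s : E → V) (x : V → ℤ) (p : V → A) {h : ℕ}
    [Fintype (SUp s x)]
    (mup : SUp s x ≃ Fin h) : Matrix (Fin h) (Fin h) A :=
  ∑ q : SUp s x, Matrix.single (mup q) (mup q) (p (rext r q.1.1))

section Helpers

variable {n α β : Type*} [DecidableEq n]

lemma star_stdBasisMatrix [AddMonoid α] [StarAddMonoid α] (i j : n) (c : α) :
    star (Matrix.single i j c) = Matrix.single j i (star c) := by
  ext a b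
  simp only [Matrix.star_apply, Matrix.single, Matrix.of_apply]
  split <;> split <;> simp_all

lemma stdBasisMatrix_sub [AddGroup α] (i j : n) (a b : α) :
    Matrix.single i j (a - b)
      = Matrix.single i j a - Matrix.single i j b := by
  ext a' b'
  simp only [Matrix.single, Matrix.sub_apply, Matrix.of_apply]
  split <;> simp

lemma stdBasisMatrix_sum [AddCommMonoid α] (i j : n) (t : Finset β) (f : β → α) :
    Matrix.single i j (∑ e ∈ t, f e)
      = ∑ e ∈ t, Matrix.single i j (f e) := by
  classical
  induction t using Finset.induction_on with
  | empty => simp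
  | insert _ _ hx ih =>
      rw [Finset.sum_insert hx, Finset.sum_insert hx, Matrix.single_add, ih]

end Helpers

section Aux

variable {V E A : Type*} [NonUnitalRing A] [StarRing A]
    (s : E → V) (x : V → ℤ) (S : E → A) {h : ℕ}
    [Fintype (SUp s x)] [Fintype (SDn s x)]
    (mup : SUp s x ≃ Fin h) (mdn : SDn s x ≃ Fin h)

noncomputable def Fd (q : SDn s x) : Matrix (Fin h) (Fin h) A :=
  match q with
  | ⟨(Sum.inl e, i), hq⟩ =>
      Matrix.single (mup ⟨(Sum.inr (s e), i), hq⟩) (mdn ⟨(Sum.inl e, i), hq⟩) (S e)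
  | ⟨(Sum.inr _, _), _⟩ => 0

noncomputable def Fu (q : SUp s x) : Matrix (Fin h) (Fin h) A :=
  match q with
  | ⟨(Sum.inl e, i), hq⟩ =>
      Matrix.single (mup ⟨(Sum.inl e, i), hq⟩) (mdn ⟨(Sum.inr (s e), i), hq⟩) (star (S e))
  | ⟨(Sum.inr _, _), _⟩ => 0

noncomputable def Gmat (q : SDn s x) : Matrix (Fin h) (Fin h) A :=
  match q with
  | ⟨(Sum.inl e, i), hq⟩ =>
      Matrix.single (mup ⟨(Sum.inr (s e), i), hq⟩) (mup ⟨(Sum.inr (s e), i), hq⟩)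
        (S e * star (S e))
  | ⟨(Sum.inr _, _), _⟩ => 0

noncomputable def Hmat (q : SUp s x) : Matrix (Fin h) (Fin h) A :=
  match q with
  | ⟨(Sum.inl e, i), hq⟩ =>
      Matrix.single (mup ⟨(Sum.inl e, i), hq⟩) (mup ⟨(Sum.inl e, i), hq⟩)
        (star (S e) * S e)
  | ⟨(Sum.inr _, _), _⟩ => 0

noncomputable def Kmat (q : SUp s x) : Matrix (Fin h) (Fin h) A :=
  match q with
  | ⟨(Sum.inl _, _), _⟩ => 0
  | ⟨(Sum.inr w, i), hq⟩ =>
      Matrix.single (mup ⟨(Sum.inr w, i), hq⟩) (mup ⟨(Sum.inr w, i), hq⟩)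
        (∑ᶠ e ∈ {e | s e = w}, S e * star (S e))

lemma Vmat_eq : Vmat s x S mup mdn = (∑ q : SDn s x, Fd s x S mup mdn q)
    + (∑ q : SUp s x, Fu s x S mup mdn q) := rfl

lemma key_mul (hS_orth : ∀ e f, e ≠ f → star (S e) * S f = 0) :
    Vmat s x S mup mdn * star (Vmat s x S mup mdn)
      = (∑ q : SDn s x, Gmat s x S mup q) + (∑ q : SUp s x, Hmat s x S mup q) := by
  classical
  rw [Vmat_eq, star_add, star_sum, star_sum, add_mul, mul_add, mul_add,
    Finset.sum_mul_sum, Finset.sum_mul_sum, Finset.sum_mul_sum, Finset.sum_mul_sum]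
  have hA : (∑ q : SDn s x, ∑ q' : SDn s x,
      Fd s x S mup mdn q * star (Fd s x S mup mdn q')) = ∑ q : SDn s x, Gmat s x S mup q := by
    apply Finset.sum_congr rfl
    rintro ⟨⟨e | v, i⟩, hq⟩ -
    · rw [Finset.sum_eq_single (⟨(Sum.inl e, i), hq⟩ : SDn s x)]
      · rw [Fd, Gmat, star_stdBasisMatrix, Matrix.single_mul_single_same]
      · rintro ⟨⟨f | w, j⟩, hq'⟩ - hne
        · rw [Fd, Fd, star_stdBasisMatrix]
          exact Matrix.single_mul_single_of_ne (h := fun hc => hne (mdn.injective hc).symm) ..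
        · simp [Fd]
      · simp
    · simp [Fd, Gmat]
  have hB : (∑ q : SDn s x, ∑ q' : SUp s x,
      Fd s x S mup mdn q * star (Fu s x S mup mdn q')) = 0 := by
    apply Finset.sum_eq_zero
    rintro ⟨⟨e | v, i⟩, hq⟩ -
    · apply Finset.sum_eq_zero
      rintro ⟨⟨f | w, j⟩, hq'⟩ -
      · rw [Fd, Fu, star_stdBasisMatrix]
        refine Matrix.single_mul_single_of_ne (h := fun hc => ?_) ..
        have := congrArg (fun q : SDn s x => q.1.1) (mdn.injective hc)
        simp at this
      · simp [Fu]
    · simp [Fd]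
  have hC : (∑ q : SUp s x, ∑ q' : SDn s x,
      Fu s x S mup mdn q * star (Fd s x S mup mdn q')) = 0 := by
    apply Finset.sum_eq_zero
    rintro ⟨⟨e | v, i⟩, hq⟩ -
    · apply Finset.sum_eq_zero
      rintro ⟨⟨f | w, j⟩, hq'⟩ -
      · rw [Fu, Fd, star_stdBasisMatrix]
        refine Matrix.single_mul_single_of_ne (h := fun hc => ?_) ..
        have := congrArg (fun q : SDn s x => q.1.1) (mdn.injective hc)
        simp at this
      · simp [Fd]
    · simp [Fu]
  have hD : (∑ q : SUp s x, ∑ q' : SUp s x,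
      Fu s x S mup mdn q * star (Fu s x S mup mdn q')) = ∑ q : SUp s x, Hmat s x S mup q := by
    apply Finset.sum_congr rfl
    rintro ⟨⟨e | v, i⟩, hq⟩ -
    · rw [Finset.sum_eq_single (⟨(Sum.inl e, i), hq⟩ : SUp s x)]
      · rw [Fu, Hmat, star_stdBasisMatrix, star_star, Matrix.single_mul_single_same]
      · rintro ⟨⟨f | w, j⟩, hq'⟩ - hne
        · rw [Fu, Fu, star_stdBasisMatrix, star_star]
          by_cases hc : mdn (⟨(Sum.inr (s e), i), hq⟩ : SDn s x)
              = mdn (⟨(Sum.inr (s f), j), hq'⟩ : SDn s x)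
          · have h2 := congrArg (fun q : SDn s x => q.1) (mdn.injective hc)
            simp only [Prod.mk.injEq, Sum.inr.injEq] at h2
            have hef : e ≠ f := by
              rintro rfl
              apply hne
              apply Subtype.ext
              show (Sum.inl e, j) = (Sum.inl e, i)
              rw [h2.2]
            rw [show (⟨(Sum.inr (s f), j), hq'⟩ : SDn s x) = ⟨(Sum.inr (s e), i), hq⟩ from
              (mdn.injective hc).symm]
            rw [Matrix.single_mul_single_same, hS_orth e f hef, Matrix.single_zero]
          · exact Matrix.single_mul_single_of_ne (h := hc) ..
        · simp [Fu]
      · simp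
    · simp [Fu, Hmat]
  rw [hA, hB, hC, hD, add_zero, zero_add]


noncomputable def phi (q : SDn s x) : SUp s x :=
  match q with
  | ⟨(Sum.inl e, i), hq⟩ => ⟨(Sum.inr (s e), i), hq⟩
  | ⟨(Sum.inr v, i), hq⟩ => mup.symm (mdn ⟨(Sum.inr v, i), hq⟩)

include mdn in
lemma G_eq_K (hemit : ∀ v, x v ≠ 0 → {e | s e = v}.Finite) :
    (∑ q : SDn s x, Gmat s x S mup q) = ∑ q : SUp s x, Kmat s x S mup q := by
  classical
  have hL : (∑ q : SDn s x, Gmat s x S mup q)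
      = ∑ q ∈ Finset.univ.filter (fun q : SDn s x => (q.1.1.isLeft : Prop)),
          Gmat s x S mup q := by
    refine (Finset.sum_filter_of_ne ?_).symm
    rintro ⟨⟨e | v, i⟩, hq⟩ - hne
    · simp
    · simp [Gmat] at hne
  have hR : (∑ q : SUp s x, Kmat s x S mup q)
      = ∑ q ∈ Finset.univ.filter (fun q : SUp s x => (q.1.1.isRight : Prop)),
          Kmat s x S mup q := by
    refine (Finset.sum_filter_of_ne ?_).symm
    rintro ⟨⟨e | v, i⟩, hq⟩ - hne
    · simp [Kmat] at hne
    · simp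
  rw [hL, hR]
  rw [← Finset.sum_fiberwise_of_maps_to (g := phi s x mup mdn)
    (t := Finset.univ.filter (fun q : SUp s x => (q.1.1.isRight : Prop)))
    (fun q hq => ?_) (Gmat s x S mup)]
  swap
  · -- maps to
    rcases q with ⟨⟨e | v, i⟩, hqd⟩
    · simp [phi]
    · simp at hq
  apply Finset.sum_congr rfl
  rintro ⟨⟨e0 | w, i'⟩, hq'⟩ hmem
  · simp at hmem
  · have hq'' : 1 ≤ i' ∧ i' ≤ x w := hq'
    have hw : x w ≠ 0 := by omega
    rw [Kmat, finsum_mem_eq_finite_toFinset_sum _ (hemit w hw), stdBasisMatrix_sum]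
    refine (Finset.sum_bij
      (i := fun e he => (⟨(Sum.inl e, i'), by
        have hse : s e = w := by simpa using he
        exact ⟨hq''.1, by rw [hse]; exact hq''.2⟩⟩ : SDn s x)) ?_ ?_ ?_ ?_).symm
    · -- maps into the fiber
      intro e he
      have hse : s e = w := by simpa using he
      simp only [Finset.mem_filter, Finset.mem_univ, true_and]
      constructor
      · simp
      · simp only [phi]
        exact Subtype.ext (by simp [hse])
    · -- injective
      intro e he f hf hef
      have := congrArg (fun q : SDn s x => q.1.1) hef
      simpa using this
    · -- surjective
      rintro ⟨⟨e | v, j⟩, hqd⟩ hqm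
      · simp only [Finset.mem_filter, Finset.mem_univ, true_and] at hqm
        have hphi := hqm.2
        simp only [phi] at hphi
        have hval := congrArg Subtype.val hphi
        simp only [Prod.mk.injEq, Sum.inr.injEq] at hval
        refine ⟨e, ?_, ?_⟩
        · simp [hval.1]
        · exact Subtype.ext (by simp [hval.2])
      · simp at hqm
    · -- values agree
      intro e he
      have hse : s e = w := by simpa using he
      simp only [Gmat]
      have hup : (⟨(Sum.inr (s e), i'), by
          exact ⟨hq''.1, by rw [hse]; exact hq''.2⟩⟩ : SUp s x)
          = ⟨(Sum.inr w, i'), hq'⟩ := Subtype.ext (by simp [hse])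
      rw [hup]

end Aux

theorem stmt15 {V E A : Type*} [Countable V] [Countable E] [NonUnitalCStarAlgebra A]
    (r s : E → V) (p : V → A) (S : E → A)
    (hp_star : ∀ v, star (p v) = p v)
    (hp_idem : ∀ v, p v * p v = p v)
    (hp_orth : ∀ v w, v ≠ w → p v * p w = 0)
    (hCK1 : ∀ e, star (S e) * S e = p (r e))
    (hS_orth : ∀ e f, e ≠ f → star (S e) * S f = 0)
    (hCK3 : ∀ e, p (s e) * S e = S e)
    (x : V → ℤ) (hsupp : {v | x v ≠ 0}.Finite)
    (hemit : ∀ v, x v ≠ 0 → {e | s e = v}.Finite)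
    (hker : ∀ v, ∑ᶠ e ∈ {e | r e = v}, x (s e) = x v)
    {h : ℕ} [Fintype (SUp s x)] [Fintype (SDn s x)]
    (mup : SUp s x ≃ Fin h) (mdn : SDn s x ≃ Fin h)
    (hcomp : ∀ (q : SUp s x) (q' : SDn s x), mup q = mdn q' → rext r q.1.1 = rext r q'.1.1) :
    Pmat r s x p mup - Vmat s x S mup mdn * star (Vmat s x S mup mdn) =
      ∑ q : SUp s x, Matrix.single (mup q) (mup q)
        (match q.1.1 with
         | Sum.inl _ => (0 : A)
         | Sum.inr w => p w - ∑ᶠ e ∈ {e | s e = w}, S e * star (S e)) := by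
  classical
  rw [key_mul s x S mup mdn hS_orth, G_eq_K s x S mup mdn hemit, Pmat,
    ← Finset.sum_add_distrib, ← Finset.sum_sub_distrib]
  apply Finset.sum_congr rfl
  rintro ⟨⟨e | w, i⟩, hq⟩ -
  · rw [Kmat, Hmat, hCK1, zero_add]
    show Matrix.single _ _ (p (r e)) - _ = Matrix.single _ _ (0 : A)
    rw [Matrix.single_zero, sub_self]
  · rw [Kmat, Hmat, add_zero]
    show _ - _ = Matrix.single _ _ (p w - ∑ᶠ e ∈ {e | s e = w}, S e * star (S e))
    rw [stdBasisMatrix_sub]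
    rfl
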